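/- For n ≥ 2 agents, p ≥ 2 items, uniform independent profiles, a policy π of length p with π_1 = 1, any agent i ≠ 1, and any q ∈ {1,…,p}: a_i(q,π) = ((q−1)/p)·a_i(q−1,π̃) + ((p−q)/p)·a_i(q,π̃), where for a policy ρ of length r, a_i(q,ρ) denotes the probability (over uniform independent profiles on r items) that agent i receives the item she ranks in position r−q+1 of her own ranking, with the convention a_i(0,ρ) = 0. -/

import Mathlib

open Finset

namespace SeqAlloc

/-- Given an agent's ranking `r` (a bijection sending each item to its position,
position `0` being the most preferred), pick the most preferred item of a
nonempty set `S` of remaining items. -/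
def pickItem {p : ℕ} (r : Equiv.Perm (Fin p)) (S : Finset (Fin p)) (h : S.Nonempty) : Fin p :=
  r.symm ((S.image r).min' (h.image r))

/-- Sequential allocation: the agents in the list take turns; each takes her
most preferred remaining item.  Returns the list of (agent, item) pairs. -/
def allocList {n p : ℕ} (R : Fin n → Equiv.Perm (Fin p)) :
    List (Fin n) → Finset (Fin p) → List (Fin n × Fin p)
  | [], _ => []
  | a :: rest, S =>
    if h : S.Nonempty then
      (a, pickItem (R a) S h) :: allocList R rest (S.erase (pickItem (R a) S h))
    else []

/-- The utility that agent `i` obtains when the items `Fin p` are allocated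
sequentially according to the policy `π` under profile `R`, where an item
ranked in (1-indexed) position `k` by an agent is worth `g k` to her. -/
noncomputable def utilAgent {n p : ℕ} (g : ℕ → ℝ) (R : Fin n → Equiv.Perm (Fin p))
    (π : List (Fin n)) (i : Fin n) : ℝ :=
  ((allocList R π Finset.univ).map
    (fun x => if x.1 = i then g (((R i) x.2).val + 1) else 0)).sum

/-- The expected utility of agent `i` under policy `π` for `p` items and scoring
function `g`, the profiles being drawn uniformly and independently. -/
noncomputable def expectedUtil (n p : ℕ) (g : ℕ → ℝ) (π : List (Fin n)) (i : Fin n) : ℝ :=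
  (∑ R : Fin n → Equiv.Perm (Fin p), utilAgent g R π i) / ((p.factorial : ℝ) ^ n)

/-- Expected Borda utility: an item ranked (1-indexed) in position `k` is worth
`p - k + 1`. -/
noncomputable def expectedBordaUtil (n p : ℕ) (π : List (Fin n)) (i : Fin n) : ℝ :=
  expectedUtil n p (fun k => (p : ℝ) - k + 1) π i

/-- The strictly alternating policy `1212…` of length `p` for two agents. -/
def altPolicy (p : ℕ) : List (Fin 2) :=
  (List.range p).map (fun k => if k % 2 = 0 then 0 else 1)

end SeqAlloc

namespace Stmt1Aux
open SeqAlloc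
variable {m : ℕ}

def uncompress (x0 t : Fin (m + 1)) (r : Equiv.Perm (Fin m)) : Equiv.Perm (Fin (m + 1)) :=
  (finSuccEquiv' x0).trans (r.optionCongr.trans (finSuccEquiv' t).symm)

@[simp] lemma uncompress_apply_x0 (x0 t : Fin (m + 1)) (r : Equiv.Perm (Fin m)) :
    uncompress x0 t r x0 = t := by
  simp [uncompress, finSuccEquiv'_at, finSuccEquiv'_symm_none]

@[simp] lemma uncompress_succAbove (x0 t : Fin (m + 1)) (r : Equiv.Perm (Fin m)) (v : Fin m) :
    uncompress x0 t r (x0.succAbove v) = t.succAbove (r v) := by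
  simp [uncompress, finSuccEquiv'_succAbove, finSuccEquiv'_symm_some]

lemma uncompress_inj (x0 : Fin (m + 1)) {t t' : Fin (m + 1)} {r s : Equiv.Perm (Fin m)}
    (h : uncompress x0 t r = uncompress x0 t' s) : t = t' ∧ r = s := by
  have ht : t = t' := by
    have := congrArg (fun e : Equiv.Perm (Fin (m+1)) => e x0) h
    simpa using this
  subst ht
  refine ⟨rfl, Equiv.ext fun v => ?_⟩
  have := congrArg (fun e : Equiv.Perm (Fin (m+1)) => e (x0.succAbove v)) h
  simp only [uncompress_succAbove] at this
  exact Fin.succAbove_right_injective this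

lemma min'_image' {α β : Type*} [LinearOrder α] [LinearOrder β] [DecidableEq β] {f : α → β}
    (hf : StrictMono f) (s : Finset α) (hs : s.Nonempty) :
    (s.image f).min' (hs.image f) = f (s.min' hs) := by
  apply le_antisymm
  · exact Finset.min'_le _ _ (Finset.mem_image_of_mem f (Finset.min'_mem s hs))
  · apply Finset.le_min'
    intro y hy
    obtain ⟨x, hx, rfl⟩ := Finset.mem_image.1 hy
    exact hf.monotone (Finset.min'_le s x hx)

lemma min'_congr {α : Type*} [LinearOrder α] {s t : Finset α} (h : s = t) (hs : s.Nonempty)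
    (ht : t.Nonempty) : s.min' hs = t.min' ht := by subst h; rfl

lemma alloc_corr {n : ℕ} (x0 : Fin (m + 1)) (R : Fin n → Equiv.Perm (Fin (m + 1)))
    (R' : Fin n → Equiv.Perm (Fin m))
    (hcompat : ∀ j v, R j (x0.succAbove v) = (R j x0).succAbove (R' j v))
    (L : List (Fin n)) (S : Finset (Fin m)) :
    allocList R L (S.image x0.succAbove)
      = (allocList R' L S).map (Prod.map id x0.succAbove) := by
  induction L generalizing S with
  | nil => simp [allocList]
  | cons a L ih =>
    by_cases h : S.Nonempty
    · have hne : (S.image x0.succAbove).Nonempty := h.image _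
      have h' : (S.image (R' a)).Nonempty := h.image _
      have him : (S.image x0.succAbove).image (R a)
          = (S.image (R' a)).image ((R a x0).succAbove) := by
        rw [Finset.image_image, Finset.image_image]
        apply Finset.image_congr
        intro v _
        exact hcompat a v
      have key : ((S.image x0.succAbove).image (R a)).min' (hne.image _)
          = R a (x0.succAbove (pickItem (R' a) S h)) := by
        calc ((S.image x0.succAbove).image (R a)).min' (hne.image _)
            = ((S.image (R' a)).image ((R a x0).succAbove)).min' (h'.image _) :=
              min'_congr him _ _
          _ = (R a x0).succAbove ((S.image (R' a)).min' h') :=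
              min'_image' (Fin.strictMono_succAbove (R a x0)) _ h'
          _ = R a (x0.succAbove (pickItem (R' a) S h)) := by
              rw [hcompat a]
              unfold pickItem
              rw [Equiv.apply_symm_apply]
      have hpick : pickItem (R a) (S.image x0.succAbove) hne
          = x0.succAbove (pickItem (R' a) S h) := by
        unfold pickItem
        rw [key, Equiv.symm_apply_apply]
        rfl
      simp only [allocList, dif_pos hne, dif_pos h, hpick]
      rw [← Finset.image_erase (Fin.succAbove_right_injective)]
      rw [ih]
      rfl
    · have h2 : ¬ (S.image x0.succAbove).Nonempty := by
        simpa [Finset.image_nonempty] using h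
      simp [allocList, h, h2]

def phi {n : ℕ} (a0 : Fin n)
    (pr : (Fin n → Fin (m + 1)) × (Fin n → Equiv.Perm (Fin m))) :
    Fin n → Equiv.Perm (Fin (m + 1)) :=
  fun j => uncompress (pr.1 a0) (if j = a0 then 0 else pr.1 j) (pr.2 j)

lemma phi_bijective {n : ℕ} (a0 : Fin n) : Function.Bijective (phi (m := m) (n := n) a0) := by
  rw [Fintype.bijective_iff_injective_and_card]
  constructor
  · rintro ⟨τ, r⟩ ⟨σ, s⟩ h
    have h0 : uncompress (τ a0) 0 (r a0) = uncompress (σ a0) 0 (s a0) := by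
      have := congrFun h a0
      simpa [phi] using this
    have hx0 : τ a0 = σ a0 := by
      calc τ a0 = (uncompress (τ a0) 0 (r a0)).symm 0 :=
            (Equiv.eq_symm_apply _).mpr (uncompress_apply_x0 _ _ _)
        _ = (uncompress (σ a0) 0 (s a0)).symm 0 := by rw [h0]
        _ = σ a0 := (Equiv.symm_apply_eq _).mpr (uncompress_apply_x0 _ _ _).symm
    have hj : ∀ j, (if j = a0 then (0 : Fin (m+1)) else τ j)
        = (if j = a0 then 0 else σ j) ∧ r j = s j := by
      intro j
      have hj0 := congrFun h j
      simp only [phi] at hj0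
      rw [hx0] at hj0
      exact uncompress_inj _ hj0
    refine Prod.ext (funext fun j => ?_) (funext fun j => (hj j).2)
    by_cases hja : j = a0
    · subst hja; exact hx0
    · have := (hj j).1
      rwa [if_neg hja, if_neg hja] at this
  · simp [Fintype.card_prod, Fintype.card_fun, Fintype.card_perm, Fintype.card_fin,
      Nat.factorial_succ, mul_pow]

lemma count_gt (k c : ℕ) :
    ∑ t : Fin k, (if c < (t : ℕ) then (1:ℝ) else 0) = ((k - (c+1) : ℕ) : ℝ) := by
  rw [Fin.sum_univ_eq_sum_range (fun j => if c < j then (1:ℝ) else 0) k, Finset.sum_boole]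
  congr 1
  have : (Finset.range k).filter (fun j => c < j) = Finset.Ico (c+1) k := by
    ext j; simp [Finset.mem_Ico]; omega
  rw [this, Nat.card_Ico]

lemma count_lt (k c : ℕ) :
    ∑ t : Fin k, (if (t : ℕ) < c then (1:ℝ) else 0) = ((min c k : ℕ) : ℝ) := by
  rw [Fin.sum_univ_eq_sum_range (fun j => if j < c then (1:ℝ) else 0) k, Finset.sum_boole]
  congr 1
  have : (Finset.range k).filter (fun j => j < c) = Finset.range (min c k) := by
    ext j; simp; omega
  rw [this, Finset.card_range]

lemma sum_comp_apply {n : ℕ} {α : Type*} [Fintype α] [DecidableEq (Fin n)] (i : Fin n)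
    (f : α → ℝ) :
    ∑ τ : Fin n → α, f (τ i) = ((Fintype.card α)^(n-1) : ℕ) * ∑ a, f a := by
  have := Equiv.sum_comp (Equiv.funSplitAt i α) (fun pr : α × ({j : Fin n // j ≠ i} → α) => f pr.1)
  simp only [Equiv.funSplitAt_apply] at this
  rw [this, Fintype.sum_prod_type]
  simp only [Finset.sum_const, nsmul_eq_mul, Finset.card_univ]
  have hcard : Fintype.card ({j : Fin n // j ≠ i} → α) = (Fintype.card α)^(n-1) := by
    rw [Fintype.card_fun]
    congr 1
    rw [Fintype.card_subtype_compl, Fintype.card_subtype_eq, Fintype.card_fin]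
  rw [hcard, Finset.mul_sum]

lemma succAbove_val_iff (t : Fin (m+1)) (w : Fin m) (q : ℕ) (hq1 : 1 ≤ q)
    (hqp : q ≤ m + 1) :
    ((t.succAbove w : Fin (m+1)) : ℕ) = (m+1) - q ↔
      ((m+1-q < (t:ℕ) ∧ (w:ℕ) = m - (q-1)) ∨ ((t:ℕ) < m+1-q ∧ (w:ℕ) = m - q)) := by
  have hv : ((t.succAbove w : Fin (m+1)) : ℕ)
      = if (w:ℕ) < (t:ℕ) then (w:ℕ) else (w:ℕ)+1 := by
    rcases lt_or_ge (w.castSucc) t with hlt | hle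
    · rw [Fin.succAbove_of_castSucc_lt _ _ hlt]
      have h2 : (w:ℕ) < (t:ℕ) := by simpa [Fin.lt_def] using hlt
      simp [h2]
    · rw [Fin.succAbove_of_le_castSucc _ _ hle]
      have h2 : (t:ℕ) ≤ (w:ℕ) := by simpa [Fin.le_def] using hle
      simp [Nat.not_lt.mpr h2]
  have hw := w.isLt
  have ht := t.isLt
  rw [hv]; split_ifs with h <;> omega

lemma ite_or_split (A B E1 E2 : Prop) [Decidable A] [Decidable B] [Decidable E1] [Decidable E2]
    (hAB : ¬(A ∧ B)) :
    (if (A ∧ E1) ∨ (B ∧ E2) then (1:ℝ) else 0)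
      = (if A then (1:ℝ) else 0) * (if E1 then (1:ℝ) else 0)
        + (if B then (1:ℝ) else 0) * (if E2 then (1:ℝ) else 0) := by
  by_cases hA : A <;> by_cases hB : B <;> by_cases h1 : E1 <;> by_cases h2 : E2 <;> simp_all

open scoped Classical in
lemma event_eval {n : ℕ} (a0 i : Fin n) (hi : i ≠ a0) (tl : List (Fin n)) (q : ℕ)
    (hq1 : 1 ≤ q) (hqp : q ≤ m + 1)
    (τ : Fin n → Fin (m+1)) (r : Fin n → Equiv.Perm (Fin m)) :
    (if ∃ x ∈ allocList (phi a0 (τ, r)) (a0 :: tl) Finset.univ,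
        x.1 = i ∧ ((phi a0 (τ, r) i) x.2).val = (m+1) - q then (1:ℝ) else 0)
    = (if (m+1-q) < ((τ i : Fin (m+1)) : ℕ) then (1:ℝ) else 0) *
        (if ∃ y ∈ allocList r tl Finset.univ, y.1 = i ∧ ((r i) y.2).val = m - (q-1)
          then (1:ℝ) else 0)
      + (if ((τ i : Fin (m+1)) : ℕ) < m+1-q then (1:ℝ) else 0) *
        (if ∃ y ∈ allocList r tl Finset.univ, y.1 = i ∧ ((r i) y.2).val = m - q
          then (1:ℝ) else 0) := by
  set x0 := τ a0 with hx0def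
  set R := phi a0 (τ, r) with hRdef
  have hRa0 : R a0 = uncompress x0 0 (r a0) := by simp [hRdef, phi, hx0def]
  have hRi : R i = uncompress x0 (τ i) (r i) := by simp [hRdef, phi, hi, hx0def]
  have hcompat : ∀ j v, R j (x0.succAbove v) = (R j x0).succAbove (r j v) := by
    intro j v
    by_cases hj : j = a0 <;> simp [hRdef, phi, hj, hx0def]
  have hRix0 : R i x0 = τ i := by rw [hRi, uncompress_apply_x0]
  have huniv : (Finset.univ : Finset (Fin (m+1))).Nonempty := Finset.univ_nonempty
  have hpick0 : pickItem (R a0) Finset.univ huniv = x0 := by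
    unfold pickItem
    rw [Equiv.symm_apply_eq, hRa0, uncompress_apply_x0]
    apply le_antisymm
    · exact Finset.min'_le _ _
        (Finset.mem_image.mpr ⟨x0, Finset.mem_univ _, by rw [← hRa0]; rw [hRa0]; exact uncompress_apply_x0 _ _ _⟩)
    · exact Fin.zero_le _
  have herase : (Finset.univ : Finset (Fin (m+1))).erase x0
      = (Finset.univ : Finset (Fin m)).image x0.succAbove := by
    ext y
    simp only [Finset.mem_erase, Finset.mem_univ, and_true, Finset.mem_image, true_and]
    constructor
    · intro hy
      obtain ⟨v, hv⟩ := Fin.exists_succAbove_eq hy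
      exact ⟨v, hv⟩
    · rintro ⟨v, rfl⟩
      exact x0.succAbove_ne v
  have halloc : allocList R (a0 :: tl) Finset.univ
      = (a0, x0) :: (allocList r tl Finset.univ).map (Prod.map id x0.succAbove) := by
    simp only [allocList, dif_pos huniv, hpick0]
    rw [herase, alloc_corr x0 R r hcompat]
  have hev : (∃ x ∈ allocList R (a0 :: tl) Finset.univ,
        x.1 = i ∧ ((R i) x.2).val = (m+1) - q)
      ↔ (((m+1-q) < ((τ i : Fin (m+1)) : ℕ) ∧
            ∃ y ∈ allocList r tl Finset.univ, y.1 = i ∧ ((r i) y.2).val = m - (q-1))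
        ∨ (((τ i : Fin (m+1)) : ℕ) < m+1-q ∧
            ∃ y ∈ allocList r tl Finset.univ, y.1 = i ∧ ((r i) y.2).val = m - q)) := by
    rw [halloc]
    constructor
    · rintro ⟨x, hx, hxi, hxv⟩
      rcases List.mem_cons.mp hx with rfl | hx'
      · exact absurd hxi.symm hi
      · obtain ⟨y, hy, hyx⟩ := List.mem_map.mp hx'
        rw [← hyx] at hxi hxv
        simp only [Prod.map, id] at hxi hxv
        rw [hcompat i, hRix0] at hxv
        rcases (succAbove_val_iff (τ i) (r i y.2) q hq1 hqp).mp hxv with ⟨hA, hD⟩ | ⟨hB, hE⟩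
        · exact Or.inl ⟨hA, y, hy, hxi, hD⟩
        · exact Or.inr ⟨hB, y, hy, hxi, hE⟩
    · rintro (⟨hA, y, hy, hyi, hD⟩ | ⟨hB, y, hy, hyi, hE⟩)
      · refine ⟨(y.1, x0.succAbove y.2), List.mem_cons_of_mem _ ?_, hyi, ?_⟩
        · exact List.mem_map.mpr ⟨y, hy, rfl⟩
        · rw [hcompat i, hRix0]
          exact (succAbove_val_iff (τ i) (r i y.2) q hq1 hqp).mpr (Or.inl ⟨hA, hD⟩)
      · refine ⟨(y.1, x0.succAbove y.2), List.mem_cons_of_mem _ ?_, hyi, ?_⟩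
        · exact List.mem_map.mpr ⟨y, hy, rfl⟩
        · rw [hcompat i, hRix0]
          exact (succAbove_val_iff (τ i) (r i y.2) q hq1 hqp).mpr (Or.inr ⟨hB, hE⟩)
  rw [if_congr hev rfl rfl]
  exact ite_or_split _ _ _ _ (by omega)


open scoped Classical in
lemma main_sum {n : ℕ} (a0 i : Fin n) (hi : i ≠ a0) (tl : List (Fin n)) (q : ℕ)
    (hq1 : 1 ≤ q) (hqp : q ≤ m + 1) :
    (∑ R : Fin n → Equiv.Perm (Fin (m+1)),
        if ∃ x ∈ allocList R (a0 :: tl) Finset.univ,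
            x.1 = i ∧ ((R i) x.2).val = (m+1) - q then (1:ℝ) else 0)
      = (((m+1)^(n-1) : ℕ) : ℝ) *
          ( ((q-1 : ℕ) : ℝ) * (∑ r : Fin n → Equiv.Perm (Fin m),
              if ∃ y ∈ allocList r tl Finset.univ, y.1 = i ∧ ((r i) y.2).val = m - (q-1)
              then (1:ℝ) else 0)
          + ((m+1-q : ℕ) : ℝ) * (∑ r : Fin n → Equiv.Perm (Fin m),
              if ∃ y ∈ allocList r tl Finset.univ, y.1 = i ∧ ((r i) y.2).val = m - q
              then (1:ℝ) else 0) ) := by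
  set S1 : ℝ := ∑ r : Fin n → Equiv.Perm (Fin m),
      if ∃ y ∈ allocList r tl Finset.univ, y.1 = i ∧ ((r i) y.2).val = m - (q-1)
      then (1:ℝ) else 0 with hS1
  set S2 : ℝ := ∑ r : Fin n → Equiv.Perm (Fin m),
      if ∃ y ∈ allocList r tl Finset.univ, y.1 = i ∧ ((r i) y.2).val = m - q
      then (1:ℝ) else 0 with hS2
  rw [← (phi_bijective (m := m) a0).sum_comp
    (fun R => if ∃ x ∈ allocList R (a0 :: tl) Finset.univ,
        x.1 = i ∧ ((R i) x.2).val = (m+1) - q then (1:ℝ) else 0)]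
  rw [Fintype.sum_prod_type]
  have step : ∀ τ : Fin n → Fin (m+1),
      (∑ r : Fin n → Equiv.Perm (Fin m),
        if ∃ x ∈ allocList (phi a0 (τ, r)) (a0 :: tl) Finset.univ,
            x.1 = i ∧ ((phi a0 (τ, r) i) x.2).val = (m+1) - q then (1:ℝ) else 0)
      = (if (m+1-q) < ((τ i : Fin (m+1)) : ℕ) then (1:ℝ) else 0) * S1
        + (if ((τ i : Fin (m+1)) : ℕ) < m+1-q then (1:ℝ) else 0) * S2 := by
    intro τ
    rw [hS1, hS2, Finset.mul_sum, Finset.mul_sum, ← Finset.sum_add_distrib]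
    apply Finset.sum_congr rfl
    intro r _
    exact event_eval a0 i hi tl q hq1 hqp τ r
  calc (∑ τ : Fin n → Fin (m+1), ∑ r : Fin n → Equiv.Perm (Fin m),
        if ∃ x ∈ allocList (phi a0 (τ, r)) (a0 :: tl) Finset.univ,
            x.1 = i ∧ ((phi a0 (τ, r) i) x.2).val = (m+1) - q then (1:ℝ) else 0)
      = ∑ τ : Fin n → Fin (m+1),
          ((if (m+1-q) < ((τ i : Fin (m+1)) : ℕ) then (1:ℝ) else 0) * S1
            + (if ((τ i : Fin (m+1)) : ℕ) < m+1-q then (1:ℝ) else 0) * S2) :=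
        Finset.sum_congr rfl (fun τ _ => step τ)
    _ = (((m+1)^(n-1) : ℕ) : ℝ) * ∑ t : Fin (m+1),
          ((if (m+1-q) < (t : ℕ) then (1:ℝ) else 0) * S1
            + (if (t : ℕ) < m+1-q then (1:ℝ) else 0) * S2) := by
        have h := sum_comp_apply (α := Fin (m+1)) i
          (fun t => (if (m+1-q) < (t : ℕ) then (1:ℝ) else 0) * S1
            + (if (t : ℕ) < m+1-q then (1:ℝ) else 0) * S2)
        simpa [Fintype.card_fin] using h
    _ = (((m+1)^(n-1) : ℕ) : ℝ) * (((q-1 : ℕ) : ℝ) * S1 + ((m+1-q : ℕ) : ℝ) * S2) := by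
        congr 1
        rw [Finset.sum_add_distrib, ← Finset.sum_mul, ← Finset.sum_mul, count_gt, count_lt]
        have e1 : (m+1) - ((m+1-q)+1) = q - 1 := by omega
        have e2 : min (m+1-q) (m+1) = m+1-q := by omega
        rw [e1, e2]

end Stmt1Aux



open scoped Classical in
/-- `probGet n r π i q` is the probability, over uniform independent profiles on `r`
items, that under the sequential allocation with policy `π` agent `i` receives the
item she ranks in (1-indexed) position `r - q + 1` of her own ranking, i.e. the item
of Borda utility `q` for her.  (For `q = 0` the position is out of range, so the
probability is `0`, matching the convention `a_i(0,ρ) = 0`.) -/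
noncomputable def probGet (n r : ℕ) (π : List (Fin n)) (i : Fin n) (q : ℕ) : ℝ :=
  (∑ R : Fin n → Equiv.Perm (Fin r),
      if ∃ x ∈ SeqAlloc.allocList R π Finset.univ, x.1 = i ∧ ((R i) x.2).val = r - q
      then (1 : ℝ) else 0) / ((r.factorial : ℝ) ^ n)

/-- For `n ≥ 2` agents, `p ≥ 2` items, uniform independent profiles,
a policy `π` of length `p` with first entry agent `1`, any agent `i ≠ 1` and any
`q ∈ {1,…,p}`:
`a_i(q,π) = ((q−1)/p)·a_i(q−1,π̃) + ((p−q)/p)·a_i(q,π̃)`. -/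
theorem stmt1 (n p : ℕ) (hn : 2 ≤ n) (hp : 2 ≤ p)
    (π : List (Fin n)) (hlen : π.length = p)
    (hhead : π.head? = some ⟨0, by omega⟩)
    (i : Fin n) (hi : i ≠ ⟨0, by omega⟩)
    (q : ℕ) (hq1 : 1 ≤ q) (hqp : q ≤ p) :
    probGet n p π i q
      = ((q : ℝ) - 1) / p * probGet n (p - 1) π.tail i (q - 1)
        + ((p : ℝ) - q) / p * probGet n (p - 1) π.tail i q := by
  classical
  obtain ⟨m, rfl⟩ : ∃ m, p = m + 1 := ⟨p - 1, by omega⟩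
  have hm : 1 ≤ m := by omega
  obtain ⟨tl, hπ⟩ : ∃ tl, π = (⟨0, by omega⟩ : Fin n) :: tl := by
    cases π with
    | nil => simp at hhead
    | cons b tlist =>
      refine ⟨tlist, ?_⟩
      have hb : b = (⟨0, by omega⟩ : Fin n) := by simpa using hhead
      rw [hb]
  rw [hπ]
  simp only [List.tail_cons, Nat.add_sub_cancel]
  unfold probGet
  rw [Stmt1Aux.main_sum (⟨0, by omega⟩ : Fin n) i hi tl q hq1 hqp]
  obtain ⟨k, rfl⟩ : ∃ k, n = k + 1 := ⟨n - 1, by omega⟩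
  have hfact : (((m+1).factorial : ℕ) : ℝ) = ((m:ℝ)+1) * (m.factorial : ℝ) := by
    rw [Nat.factorial_succ]; push_cast; ring
  have hfne : ((m.factorial : ℕ) : ℝ) ≠ 0 := Nat.cast_ne_zero.mpr (Nat.factorial_ne_zero m)
  have hmne : ((m:ℝ)+1) ≠ 0 := by positivity
  have hc1 : ((q-1 : ℕ) : ℝ) = (q:ℝ) - 1 := by
    push_cast [hq1]; ring
  have hc2 : ((m+1-q : ℕ) : ℝ) = ((m:ℝ)+1) - q := by
    push_cast [hqp]; ring
  rw [hc1, hc2]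
  simp only [Nat.add_sub_cancel]
  have hD : (((m+1).factorial : ℕ) : ℝ)^(k+1)
      = (((m:ℝ)+1)^(k+1)) * ((m.factorial : ℕ) : ℝ)^(k+1) := by
    rw [hfact, mul_pow]
  rw [hD]
  have hpne : (((m:ℝ)+1)^(k+1)) ≠ 0 := by positivity
  have hfkne : ((m.factorial : ℕ) : ℝ)^(k+1) ≠ 0 := by positivity
  rw [pow_succ ((m:ℝ)+1) k, pow_succ ((m.factorial : ℕ) : ℝ) k]
  push_cast
  field_simp
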